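/- Let k be a positive integer that is not a power of 2 and let n be a positive integer. If (k,n) = (3,3), or k ≡ 0 (mod 4) and 4n ≥ k + 8, or k ≡ 1 (mod 4) and 4n ≥ k + 11, or k ≡ 2 (mod 4) and 4n ≥ k + 10, or k ≡ 3 (mod 4) and 4n ≥ k + 13, then there exists a function x : Fin n → ℕ with every x i in S(k), with ∑ i, (1:ℚ)/(x i) = 1, and with k dividing x i for some i. -/

import Mathlib

private lemma repl_sum (n x : ℕ) :
    ((List.replicate n x).map (fun y : ℕ => (1:ℚ)/y)).sum = n / x := by
  rw [List.map_replicate, List.sum_replicate, nsmul_eq_mul]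
  ring

private lemma map_mul_sum (k : ℕ) (l : List ℕ) :
    ((l.map (fun x => x * k)).map (fun x : ℕ => (1:ℚ)/x)).sum
      = ((l.map (fun x : ℕ => (1:ℚ)/x)).sum) / k := by
  induction l with
  | nil => simp
  | cons a t ih =>
      simp only [List.map_cons, List.sum_cons, ih, Nat.cast_mul, add_div, div_div]

private lemma key (k : ℕ) (hk : 3 ≤ k) : ∀ m : ℕ, ∀ u : ℕ, k ≤ u → u ≤ 4*m → u ≠ 4*m - 1 →
    ∃ l : List ℕ, l.length = m ∧ (∀ x ∈ l, ∃ a b : ℕ, a ≤ 2 ∧ 1 ≤ b ∧ x = 2^a * k^b) ∧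
      (l.map (fun x : ℕ => (1:ℚ)/x)).sum = u / (4*k) := by
  intro m
  induction m using Nat.strong_induction_on with
  | _ m IH =>
    intro u hku hu4 hne
    have hk0 : (k:ℚ) ≠ 0 := by positivity
    by_cases hmu : m ≤ u
    · -- single level
      obtain ⟨A,B,C,h1,h2⟩ : ∃ A B C : ℕ, A+B+C = m ∧ 4*A+2*B+C = u :=
        ⟨(u-m)/3, (u-m)%3, m - (u-m)/3 - (u-m)%3, by omega, by omega⟩
      refine ⟨List.replicate A k ++ List.replicate B (2*k) ++ List.replicate C (4*k),
        by simp [h1]; omega, ?_, ?_⟩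
      · intro x hx
        simp only [List.mem_append, List.mem_replicate] at hx
        rcases hx with (⟨-, rfl⟩|⟨-, rfl⟩)|⟨-, rfl⟩
        · exact ⟨0, 1, by norm_num⟩
        · exact ⟨1, 1, by norm_num⟩
        · exact ⟨2, 1, by norm_num⟩
      · have h2' : 4*(A:ℚ)+2*B+C = u := by exact_mod_cast h2
        simp only [List.map_append, List.sum_append, repl_sum]
        rw [← h2']
        have h2k : ((2*k : ℕ):ℚ) = 2*k := by push_cast; ring
        have h4k : ((4*k : ℕ):ℚ) = 4*k := by push_cast; ring
        rw [h2k, h4k]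
        field_simp
        ring
    · -- recursion
      push_neg at hmu
      set m₁ := (u+6)/4 with hm₁
      have hrec := IH (m - m₁) (by omega) k le_rfl (by omega) (by omega)
      obtain ⟨l₂, hl₂len, hl₂mem, hl₂sum⟩ := hrec
      obtain ⟨A,B,C,h1,h2⟩ : ∃ A B C : ℕ, A+B+C = m₁ ∧ 4*A+2*B+C = u - 1 :=
        ⟨(u-1-m₁)/3, (u-1-m₁)%3, m₁ - (u-1-m₁)/3 - (u-1-m₁)%3, by omega, by omega⟩
      refine ⟨(List.replicate A k ++ List.replicate B (2*k) ++ List.replicate C (4*k))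
          ++ l₂.map (fun x => x * k), by simp [h1, hl₂len]; omega, ?_, ?_⟩
      · intro x hx
        simp only [List.mem_append, List.mem_replicate, List.mem_map] at hx
        rcases hx with ((⟨-, rfl⟩|⟨-, rfl⟩)|⟨-, rfl⟩)|⟨y, hy, rfl⟩
        · exact ⟨0, 1, by norm_num⟩
        · exact ⟨1, 1, by norm_num⟩
        · exact ⟨2, 1, by norm_num⟩
        · obtain ⟨a, b, ha, hb, rfl⟩ := hl₂mem y hy
          exact ⟨a, b+1, ha, by omega, by ring⟩
      · have h2' : 4*(A:ℚ)+2*B+C = (u:ℚ) - 1 := by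
          have : ((4*A+2*B+C : ℕ):ℚ) = ((u-1:ℕ):ℚ) := by rw [h2]
          push_cast [Nat.cast_sub (by omega : 1 ≤ u)] at this
          linarith
        simp only [List.map_append, List.sum_append, repl_sum, map_mul_sum, hl₂sum]
        have h2k : ((2*k : ℕ):ℚ) = 2*k := by push_cast; ring
        have h4k : ((4*k : ℕ):ℚ) = 4*k := by push_cast; ring
        rw [h2k, h4k]
        have hu' : (u:ℚ) = 4*A+2*B+C+1 := by linarith
        rw [hu']
        field_simp
        ring

/-- Proposition 4.2 (sufficiency): if `(k,n) = (3,3)` or the stated inequalities hold,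
then `∑ 1/xᵢ = 1` has a nontrivial solution in integers of the form `2^a * k^b`. -/

private lemma sum_fin_get (l : List ℕ) :
    ∑ j : Fin l.length, (1:ℚ)/(l.get j) = (l.map (fun x : ℕ => (1:ℚ)/x)).sum := by
  induction l with
  | nil => simp
  | cons a t ih =>
      rw [List.map_cons, List.sum_cons, ← ih]
      exact Fin.sum_univ_succ _

/-- Proposition 4.2 (sufficiency): if `(k,n) = (3,3)` or the stated inequalities hold,
then `∑ 1/xᵢ = 1` has a nontrivial solution in integers of the form `2^a * k^b`. -/
theorem nontrivial_solution_of_bound (k n : ℕ) (hk : 0 < k)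
    (hk2 : ¬ ∃ m : ℕ, k = 2 ^ m) (hn : 0 < n)
    (h : (k = 3 ∧ n = 3) ∨
        (k % 4 = 0 ∧ 4 * n ≥ k + 8) ∨
        (k % 4 = 1 ∧ 4 * n ≥ k + 11) ∨
        (k % 4 = 2 ∧ 4 * n ≥ k + 10) ∨
        (k % 4 = 3 ∧ 4 * n ≥ k + 13)) :
    ∃ x : Fin n → ℕ,
      (∀ i, ∃ a b : ℕ, a ≤ 2 ∧ x i = 2 ^ a * k ^ b) ∧
      (∑ i, (1 : ℚ) / (x i)) = 1 ∧
      (∃ i, k ∣ x i) := by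
  rcases h with ⟨hk3, hn3⟩ | h'
  · subst hk3; subst hn3
    refine ⟨fun _ => 3, fun i => ⟨0, 1, by norm_num⟩, ?_, ⟨0, dvd_refl 3⟩⟩
    simp [Finset.sum_const]
  · have hk1 : k ≠ 1 := fun e => hk2 ⟨0, by simp [e]⟩
    have hk2' : k ≠ 2 := fun e => hk2 ⟨1, by simp [e]⟩
    have hk3 : 3 ≤ k := by omega
    have hc : k ≤ 4*(n-2) ∧ k ≠ 4*(n-2) - 1 := by
      rcases h' with ⟨h1,h2⟩|⟨h1,h2⟩|⟨h1,h2⟩|⟨h1,h2⟩ <;> omega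
    obtain ⟨l, hlen, hmem, hsum⟩ := key k hk3 (n-2) k le_rfl hc.1 hc.2
    have hl1 : 1 ≤ l.length := by omega
    have hLlen : (2 :: 4 :: l : List ℕ).length = n := by simp [hlen]; omega
    refine ⟨fun i => (2 :: 4 :: l : List ℕ).get (Fin.cast hLlen.symm i), ?_, ?_, ?_⟩
    · intro i
      show ∃ a b : ℕ, a ≤ 2 ∧ (2 :: 4 :: l : List ℕ).get (Fin.cast hLlen.symm i) = 2^a*k^b
      have hmL : (2 :: 4 :: l : List ℕ).get (Fin.cast hLlen.symm i) ∈ (2 :: 4 :: l : List ℕ) :=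
        List.get_mem _ _
      simp only [List.mem_cons] at hmL
      rcases hmL with hx | hx | hx
      · exact ⟨1, 0, by norm_num, by rw [hx]; norm_num⟩
      · exact ⟨2, 0, by norm_num, by rw [hx]; norm_num⟩
      · obtain ⟨a, b, ha, -, hx'⟩ := hmem _ hx
        exact ⟨a, b, ha, by rw [hx']⟩
    · have e1 : (∑ i : Fin n, (1:ℚ)/((2 :: 4 :: l : List ℕ).get (Fin.cast hLlen.symm i)))
          = ∑ j : Fin (2 :: 4 :: l : List ℕ).length, (1:ℚ)/((2 :: 4 :: l : List ℕ).get j) :=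
        Fintype.sum_equiv (finCongr hLlen.symm) _ _ (fun i => rfl)
      show (∑ i : Fin n, (1:ℚ)/((2 :: 4 :: l : List ℕ).get (Fin.cast hLlen.symm i))) = 1
      rw [e1, sum_fin_get]
      simp only [List.map_cons, List.sum_cons, hsum]
      have hk0 : (k:ℚ) ≠ 0 := by positivity
      rw [show ((2:ℕ):ℚ) = 2 by norm_num, show ((4:ℕ):ℚ) = 4 by norm_num]
      field_simp
      ring
    · obtain ⟨y, t, rfl⟩ : ∃ y t, l = y :: t := by
        cases l with
        | nil => simp at hl1
        | cons y t => exact ⟨y, t, rfl⟩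
      obtain ⟨a, b, ha, hb, hy⟩ := hmem y (by simp)
      have hn3 : 3 ≤ n := by omega
      refine ⟨⟨2, by omega⟩, ?_⟩
      show k ∣ y
      rw [hy]
      exact dvd_mul_of_dvd_right (dvd_pow_self k (by omega)) _
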